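/- The Cayley transform commutes with corner projections: for X ∈ Herm(N) with image U = (i-X)(i+X)⁻¹ ∈ U(N)', let X' ∈ Herm(N-1) be the top-left (N-1)×(N-1) corner of X, and let p(U) = A - B(1+D)⁻¹C where U = [[A,B],[C,D]] is the block decomposition for N = (N-1)+1. Then p(U) = (i - X')(i + X')⁻¹; in particular p(U) ∈ U(N-1)'. -/
import Mathlib


open Matrix

/-- The canonical projection on block matrices `[[A,B],[C,D]]` (scalar `D`):
`p(U) = A - B(1+D)⁻¹C`. -/
noncomputable def canonicalProj (n : ℕ) (M : Matrix (Fin n ⊕ Fin 1) (Fin n ⊕ Fin 1) ℂ) :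
    Matrix (Fin n) (Fin n) ℂ :=
  M.toBlocks₁₁ - (1 + M (Sum.inr 0) (Sum.inr 0))⁻¹ • (M.toBlocks₁₂ * M.toBlocks₂₁)

/-- The Cayley transform `X ↦ (i - X)(i + X)⁻¹`. -/
noncomputable def cayley (n : ℕ) (X : Matrix (Fin n) (Fin n) ℂ) :
    Matrix (Fin n) (Fin n) ℂ :=
  (Complex.I • (1 : Matrix (Fin n) (Fin n) ℂ) - X) *
    (Complex.I • (1 : Matrix (Fin n) (Fin n) ℂ) + X)⁻¹


lemma herm_det_ne_zero {m : Type*} [Fintype m] [DecidableEq m]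
    {X : Matrix m m ℂ} (hX : X.IsHermitian) :
    (Complex.I • (1 : Matrix m m ℂ) + X).det ≠ 0 := by
  intro h
  obtain ⟨v, hv, hmv⟩ := Matrix.exists_mulVec_eq_zero_iff.mpr h
  rw [Matrix.add_mulVec, Matrix.smul_mulVec, Matrix.one_mulVec] at hmv
  have h1 : X *ᵥ v = -(Complex.I • v) := by
    rw [eq_neg_iff_add_eq_zero, add_comm]; exact hmv
  have htstar : star (star v ⬝ᵥ v) = star v ⬝ᵥ v := by
    rw [← Matrix.star_dotProduct_star, star_star]
  have hherm : star v ⬝ᵥ (X *ᵥ v) = star (star v ⬝ᵥ (X *ᵥ v)) := by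
    conv_rhs =>
      rw [show star (star v ⬝ᵥ (X *ᵥ v)) = star (X *ᵥ v) ⬝ᵥ star (star v) by
        rw [Matrix.star_dotProduct_star]]
    rw [star_star, Matrix.star_mulVec, hX.eq, ← Matrix.dotProduct_mulVec]
  rw [h1] at hherm
  have hlhs : star v ⬝ᵥ (-(Complex.I • v)) = -(Complex.I * (star v ⬝ᵥ v)) := by
    simp [dotProduct_smul]
  rw [hlhs, star_neg, star_mul', htstar] at hherm
  have hIt : Complex.I * (star v ⬝ᵥ v) = 0 := by
    have hI : star Complex.I = -Complex.I := by simp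
    rw [hI] at hherm
    linear_combination (-1/2 : ℂ) * hherm
  have ht0 : star v ⬝ᵥ v = 0 := by
    rcases mul_eq_zero.mp hIt with h' | h'
    · exact absurd h' Complex.I_ne_zero
    · exact h'
  apply hv
  funext i
  have hsum : ∑ j, Complex.normSq (v j) = 0 := by
    have h2 : ((∑ j, Complex.normSq (v j) : ℝ) : ℂ) = 0 := by
      push_cast
      rw [← ht0, dotProduct]
      congr 1
      funext j
      simp [Complex.normSq_eq_conj_mul_self]
    exact_mod_cast h2
  have := (Finset.sum_eq_zero_iff_of_nonneg (fun j _ => Complex.normSq_nonneg (v j))).mp hsum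
  exact Complex.normSq_eq_zero.mp (this i (Finset.mem_univ i))

lemma one_add_cayley_form {m : Type*} [Fintype m] [DecidableEq m]
    (X : Matrix m m ℂ) (h : IsUnit (Complex.I • (1 : Matrix m m ℂ) + X).det) :
    1 + (Complex.I • (1 : Matrix m m ℂ) - X) * (Complex.I • (1 : Matrix m m ℂ) + X)⁻¹ =
      (2 * Complex.I) • (Complex.I • (1 : Matrix m m ℂ) + X)⁻¹ := by
  have key : (2 * Complex.I) • (Complex.I • (1 : Matrix m m ℂ) + X)⁻¹ =
      (Complex.I • (1 : Matrix m m ℂ) + X) * (Complex.I • (1 : Matrix m m ℂ) + X)⁻¹ +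
        (Complex.I • (1 : Matrix m m ℂ) - X) * (Complex.I • (1 : Matrix m m ℂ) + X)⁻¹ := by
    rw [← add_mul,
      show (Complex.I • (1 : Matrix m m ℂ) + X) + (Complex.I • (1 : Matrix m m ℂ) - X)
        = (2 * Complex.I) • 1 by module,
      Matrix.smul_mul, one_mul]
  rw [key, Matrix.mul_nonsing_inv _ h]

lemma star_I_neg : star Complex.I = -Complex.I := by simp

lemma cayley_form_mem_unitary {m : Type*} [Fintype m] [DecidableEq m]
    {X : Matrix m m ℂ} (hX : X.IsHermitian) :
    ((Complex.I • (1 : Matrix m m ℂ) - X) * (Complex.I • (1 : Matrix m m ℂ) + X)⁻¹) *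
      star ((Complex.I • (1 : Matrix m m ℂ) - X) * (Complex.I • (1 : Matrix m m ℂ) + X)⁻¹) = 1 := by
  set M : Matrix m m ℂ := Complex.I • 1 + X with hMdef
  have hdet : M.det ≠ 0 := herm_det_ne_zero hX
  have hMu : IsUnit M.det := isUnit_iff_ne_zero.mpr hdet
  have hMH : Mᴴ = X - Complex.I • 1 := by
    rw [hMdef, conjTranspose_add, conjTranspose_smul, conjTranspose_one, hX.eq, star_I_neg]
    module
  have hMHu : IsUnit (Mᴴ).det := by
    rw [Matrix.det_conjTranspose]
    exact isUnit_iff_ne_zero.mpr (star_ne_zero.mpr hdet)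
  have hA : Complex.I • (1 : Matrix m m ℂ) - X = -Mᴴ := by rw [hMH, neg_sub]
  have hstar : star ((-Mᴴ) * M⁻¹) = (Mᴴ)⁻¹ * (-M) := by
    show ((-Mᴴ) * M⁻¹)ᴴ = (Mᴴ)⁻¹ * (-M)
    rw [conjTranspose_mul, conjTranspose_neg, conjTranspose_conjTranspose,
      Matrix.conjTranspose_nonsing_inv, mul_neg]
  have hcomm : Mᴴ * M = M * Mᴴ := by
    have h2 : Mᴴ = M - (2 * Complex.I) • 1 := by rw [hMH, hMdef]; module
    rw [h2, sub_mul, mul_sub, Matrix.smul_mul, Matrix.mul_smul, one_mul, mul_one]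
  rw [hA, hstar]
  calc (-Mᴴ) * M⁻¹ * ((Mᴴ)⁻¹ * (-M))
      = Mᴴ * ((M⁻¹ * (Mᴴ)⁻¹) * M) := by
        rw [neg_mul, mul_neg, neg_mul_neg]; simp only [mul_assoc]
    _ = Mᴴ * ((Mᴴ * M)⁻¹ * M) := by rw [← Matrix.mul_inv_rev]
    _ = Mᴴ * ((M * Mᴴ)⁻¹ * M) := by rw [hcomm]
    _ = Mᴴ * (((Mᴴ)⁻¹ * M⁻¹) * M) := by rw [Matrix.mul_inv_rev]
    _ = (Mᴴ * (Mᴴ)⁻¹) * (M⁻¹ * M) := by simp only [mul_assoc]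
    _ = 1 := by rw [Matrix.mul_nonsing_inv _ hMHu, Matrix.nonsing_inv_mul _ hMu, one_mul]

/-- Main -/
theorem cayley_commutes_with_corner (n : ℕ)
    (X : Matrix (Fin n ⊕ Fin 1) (Fin n ⊕ Fin 1) ℂ) (hX : X.IsHermitian) :
    (let U := (Complex.I • (1 : Matrix (Fin n ⊕ Fin 1) (Fin n ⊕ Fin 1) ℂ) - X) *
        (Complex.I • (1 : Matrix (Fin n ⊕ Fin 1) (Fin n ⊕ Fin 1) ℂ) + X)⁻¹
     U (Sum.inr 0) (Sum.inr 0) ≠ -1 ∧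
      1 + U (Sum.inr 0) (Sum.inr 0) ≠ 0 ∧
      canonicalProj n U = cayley n X.toBlocks₁₁ ∧
      canonicalProj n U ∈ Matrix.unitaryGroup (Fin n) ℂ ∧
      (1 + canonicalProj n U).det ≠ 0) := by
  intro U
  -- basic data
  set c : ℂ := 2 * Complex.I with hcdef
  have hc : c ≠ 0 := mul_ne_zero two_ne_zero Complex.I_ne_zero
  set M : Matrix (Fin n ⊕ Fin 1) (Fin n ⊕ Fin 1) ℂ := Complex.I • 1 + X with hMdef
  have hMu : IsUnit M.det := isUnit_iff_ne_zero.mpr (herm_det_ne_zero hX)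
  have hU : U = (Complex.I • 1 - X) * M⁻¹ := rfl
  -- X' hermitian
  have hX' : X.toBlocks₁₁.IsHermitian := by
    ext i j
    have := congrFun (congrFun hX.eq (Sum.inl i)) (Sum.inl j)
    simpa [toBlocks₁₁, Matrix.conjTranspose_apply] using this
  set M' : Matrix (Fin n) (Fin n) ℂ := Complex.I • 1 + X.toBlocks₁₁ with hM'def
  have hM'u : IsUnit M'.det := isUnit_iff_ne_zero.mpr (herm_det_ne_zero hX')
  -- V is a two-sided inverse of 1 + U
  set V : Matrix (Fin n ⊕ Fin 1) (Fin n ⊕ Fin 1) ℂ := c⁻¹ • M with hVdef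
  have hWform : (1 : Matrix (Fin n ⊕ Fin 1) (Fin n ⊕ Fin 1) ℂ) + U = c • M⁻¹ :=
    one_add_cayley_form X hMu
  have hVW : V * (1 + U) = 1 := by
    rw [hWform, hVdef, Matrix.smul_mul, Matrix.mul_smul, smul_smul,
      inv_mul_cancel₀ hc, one_smul, Matrix.mul_nonsing_inv _ hMu]
  have hWV : (1 + U) * V = 1 := by
    rw [hWform, hVdef, Matrix.smul_mul, Matrix.mul_smul, smul_smul,
      mul_inv_cancel₀ hc, one_smul, Matrix.nonsing_inv_mul _ hMu]
  -- blocks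
  set E : Matrix (Fin n) (Fin n) ℂ := c⁻¹ • M' with hEdef
  set F : Matrix (Fin n) (Fin 1) ℂ := c⁻¹ • X.toBlocks₁₂ with hFdef
  set G : Matrix (Fin 1) (Fin n) ℂ := c⁻¹ • X.toBlocks₂₁ with hGdef
  set H : Matrix (Fin 1) (Fin 1) ℂ := c⁻¹ • (Complex.I • 1 + X.toBlocks₂₂) with hHdef
  have hVblocks : V = fromBlocks E F G H := by
    ext (i | i) (j | j) <;>
      simp [hVdef, hMdef, hEdef, hFdef, hGdef, hHdef, hM'def, fromBlocks,
        toBlocks₁₁, toBlocks₁₂, toBlocks₂₁, toBlocks₂₂, Matrix.one_apply]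
  set P : Matrix (Fin n) (Fin n) ℂ := 1 + U.toBlocks₁₁ with hPdef
  set Q : Matrix (Fin n) (Fin 1) ℂ := U.toBlocks₁₂ with hQdef
  set R : Matrix (Fin 1) (Fin n) ℂ := U.toBlocks₂₁ with hRdef
  set S : Matrix (Fin 1) (Fin 1) ℂ := 1 + U.toBlocks₂₂ with hSdef
  have hWblocks : (1 : Matrix (Fin n ⊕ Fin 1) (Fin n ⊕ Fin 1) ℂ) + U = fromBlocks P Q R S := by
    ext (i | i) (j | j) <;>
      simp [hPdef, hQdef, hRdef, hSdef, fromBlocks,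
        toBlocks₁₁, toBlocks₁₂, toBlocks₂₁, toBlocks₂₂, Matrix.one_apply]
  set s : ℂ := 1 + U (Sum.inr 0) (Sum.inr 0) with hsdef
  have hSs : S = s • 1 := by
    ext i j
    fin_cases i; fin_cases j
    simp [hSdef, hsdef, toBlocks₂₂, Matrix.one_apply]
  -- block equations
  rw [hVblocks, hWblocks, fromBlocks_multiply, ← fromBlocks_one] at hVW
  rw [hWblocks, hVblocks, fromBlocks_multiply, ← fromBlocks_one] at hWV
  obtain ⟨e1, e2, -, -⟩ := Matrix.ext_iff_blocks.mp hVW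
  obtain ⟨-, -, f3, f4⟩ := Matrix.ext_iff_blocks.mp hWV
  simp only [toBlocks_fromBlocks₁₁, toBlocks_fromBlocks₁₂, toBlocks_fromBlocks₂₁,
    toBlocks_fromBlocks₂₂] at e1 e2 f3 f4
  -- invertibility of E
  have hdetE : E.det ≠ 0 := by
    rw [hEdef, Matrix.det_smul]
    exact mul_ne_zero (pow_ne_zero _ (inv_ne_zero hc)) (herm_det_ne_zero hX')
  have hEu : IsUnit E.det := isUnit_iff_ne_zero.mpr hdetE
  -- s ≠ 0
  have hs : s ≠ 0 := by
    intro h0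
    have hS0 : S = 0 := by rw [hSs, h0, zero_smul]
    have hQ0 : Q = 0 := by
      have h' : E * Q = 0 := by
        have := e2; rw [hS0, Matrix.mul_zero, add_zero] at this; exact this
      calc Q = E⁻¹ * (E * Q) := by
              rw [← Matrix.mul_assoc, Matrix.nonsing_inv_mul _ hEu, Matrix.one_mul]
        _ = 0 := by rw [h', Matrix.mul_zero]
    have hR0 : R = 0 := by
      have h' : R * E = 0 := by
        have := f3; rw [hS0, Matrix.zero_mul, add_zero] at this; exact this
      calc R = (R * E) * E⁻¹ := by
              rw [Matrix.mul_assoc, Matrix.mul_nonsing_inv _ hEu, Matrix.mul_one]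
        _ = 0 := by rw [h', Matrix.zero_mul]
    rw [hR0, hS0, Matrix.zero_mul, Matrix.zero_mul, add_zero] at f4
    exact zero_ne_one (congrFun (congrFun f4 0) 0)
  -- Schur complement identity
  have hEQ : E * Q = -(s • F) := by
    have h' : F * S = s • F := by rw [hSs, Matrix.mul_smul, Matrix.mul_one]
    rw [h'] at e2
    exact eq_neg_of_add_eq_zero_left e2
  have hmain : E * (P - s⁻¹ • (Q * R)) = 1 := by
    have h1 : E * (Q * R) = -(s • (F * R)) := by
      rw [← Matrix.mul_assoc, hEQ, Matrix.neg_mul, Matrix.smul_mul]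
    rw [Matrix.mul_sub, Matrix.mul_smul, h1, smul_neg, smul_smul,
      inv_mul_cancel₀ hs, one_smul, sub_neg_eq_add, e1]
  have hcp : 1 + canonicalProj n U = P - s⁻¹ • (Q * R) := by
    rw [canonicalProj, ← add_sub_assoc]
  have hcpE : E * (1 + canonicalProj n U) = 1 := by rw [hcp]; exact hmain
  have hcayE : E * (1 + cayley n X.toBlocks₁₁) = 1 := by
    rw [cayley, one_add_cayley_form _ hM'u, hEdef, Matrix.smul_mul, Matrix.mul_smul,
      smul_smul, ← hcdef, inv_mul_cancel₀ hc, one_smul, Matrix.mul_nonsing_inv _ hM'u]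
  have heq : 1 + canonicalProj n U = 1 + cayley n X.toBlocks₁₁ :=
    (Matrix.inv_eq_right_inv hcpE).symm.trans (Matrix.inv_eq_right_inv hcayE)
  have hcpcay : canonicalProj n U = cayley n X.toBlocks₁₁ := add_left_cancel heq
  refine ⟨?_, hs, hcpcay, ?_, ?_⟩
  · intro h
    apply hs
    rw [hsdef, h]
    ring
  · rw [hcpcay, Matrix.mem_unitaryGroup_iff, cayley]
    exact cayley_form_mem_unitary hX'
  · rw [heq]
    have hd := congrArg Matrix.det hcayE
    rw [Matrix.det_mul, Matrix.det_one] at hd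
    exact right_ne_zero_of_mul_eq_one hd
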